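/- Let p be a prime number. For each prime ℓ ≠ p, let N_p(ℓ) denote the index in the multiplicative group (ℤ/ℓℤ)* of the cyclic subgroup generated by the residue of p modulo ℓ. Then the function ℓ ↦ N_p(ℓ) is unbounded: for every positive integer C there exists a prime ℓ ≠ p with N_p(ℓ) > C. -/

import Mathlib

open Polynomial

lemma zmod_pow_eq_one_iff {ℓ q k : ℕ} [NeZero ℓ] (hq : 1 ≤ q ^ k) :
    (q : ZMod ℓ) ^ k = 1 ↔ ℓ ∣ q ^ k - 1 := by
  rw [← ZMod.natCast_eq_zero_iff, Nat.cast_sub hq]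
  push_cast
  constructor
  · intro h; rw [h]; ring
  · intro h; have := sub_eq_zero.mp h; simpa using this

lemma prime_not_dvd_base {ℓ p n : ℕ} (hℓ : ℓ.Prime) (hn : 0 < n) (hp : 1 ≤ p ^ n)
    (h : ℓ ∣ p ^ n - 1) : ¬ ℓ ∣ p := by
  intro hd
  have h1 : ℓ ∣ p ^ n := hd.trans (dvd_pow_self p hn.ne')
  have h3 : ℓ ∣ 1 := by
    have := Nat.dvd_sub h1 h
    rwa [Nat.sub_sub_self hp] at this
  exact hℓ.one_lt.ne' (Nat.dvd_one.mp h3)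

lemma totient_sq_bound : ∀ m : ℕ, m ≤ 2 * (Nat.totient m)^2 := by
  intro m
  induction m using Nat.strong_induction_on with
  | _ m ih =>
    rcases Nat.eq_zero_or_pos m with rfl | hm
    · simp
    by_cases hodd : ∃ q : ℕ, q.Prime ∧ Odd q ∧ q ∣ m
    · obtain ⟨q, hq, hqodd, k, rfl⟩ := hodd
      obtain ⟨r, rfl⟩ : ∃ r, q = r + 1 := ⟨q - 1, by have := hq.two_le; omega⟩
      have hr2 : 2 ≤ r := by
        obtain ⟨t, ht⟩ := hqodd; have := hq.one_lt; omega
      have hk : 0 < k := Nat.pos_of_ne_zero (fun h => by simp [h] at hm)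
      have hklt : k < (r+1) * k := by nlinarith
      have ihk := ih k hklt
      have hsup := Nat.totient_super_multiplicative (r+1) k
      rw [Nat.totient_prime hq] at hsup
      simp only [Nat.add_sub_cancel] at hsup
      have h1 : 2 * (r * Nat.totient k)^2 ≤ 2 * (Nat.totient ((r+1)*k))^2 := by
        have := Nat.pow_le_pow_left hsup 2
        omega
      refine le_trans ?_ h1
      have htk : 0 < Nat.totient k := Nat.totient_pos.mpr hk
      calc (r+1) * k ≤ r^2 * k := by nlinarith
        _ ≤ r^2 * (2 * (Nat.totient k)^2) := Nat.mul_le_mul_left _ ihk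
        _ = 2 * (r * Nat.totient k)^2 := by ring
    · push_neg at hodd
      have h2 : ∀ {d : ℕ}, d.Prime → d ∣ m → d = 2 := by
        intro d hd hdm
        rcases hd.eq_two_or_odd' with h | h
        · exact h
        · exact absurd hdm (hodd d hd h)
      have hm2 := Nat.eq_prime_pow_of_unique_prime_dvd hm.ne' h2
      set k := m.primeFactorsList.length with hk
      rcases Nat.eq_zero_or_pos k with hk0 | hkpos
      · rw [hm2, hk0]; simp
      · rw [hm2, Nat.totient_prime_pow Nat.prime_two hkpos]
        have : 2^k ≤ 2 * (2^(k-1) * 1)^2 := by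
          rw [mul_one, ← pow_mul, ← pow_succ']
          exact Nat.pow_le_pow_right (by norm_num) (by omega)
        simpa using this

lemma four_sq_lt_three_pow : ∀ k : ℕ, 4 ≤ k → 4 * k^2 < 3^k := by
  intro k hk
  induction k with
  | zero => omega
  | succ n ih =>
    rcases Nat.lt_or_ge n 4 with h | h
    · have hn3 : n = 3 := by omega
      subst hn3; norm_num
    · have := ih (by omega)
      have h3 : 4 * (n+1)^2 ≤ 3 * (4 * n^2) := by nlinarith
      calc 4 * (n+1)^2 ≤ 3 * (4*n^2) := h3
        _ < 3 * 3^n := by omega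
        _ = 3^(n+1) := by ring

lemma two_mul_lt_three_pow_totient {m : ℕ} (hm : 19 ≤ m)
    (hsq : m ≤ 2 * (Nat.totient m)^2) : 2 * m < 3 ^ Nat.totient m := by
  have h4 : 4 ≤ Nat.totient m := by nlinarith [Nat.totient m]
  calc 2 * m ≤ 4 * (Nat.totient m)^2 := by omega
    _ < 3 ^ Nat.totient m := four_sq_lt_three_pow _ h4

lemma exists_order_eq {p : ℕ} (hp : p.Prime) {n : ℕ} (h4 : 4 ∣ n) (hn : 40 ≤ n) :
    ∃ ℓ : ℕ, ℓ.Prime ∧ ¬ ℓ ∣ p ∧ orderOf (p : ZMod ℓ) = n := by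
  have hn0 : 0 < n := by omega
  have hp2 : 2 ≤ p := hp.two_le
  have hQpos : (0 : ℤ) < (cyclotomic n ℤ).eval (p : ℤ) :=
    cyclotomic_pos' n (by exact_mod_cast hp.one_lt)
  obtain ⟨Q, hQcast⟩ : ∃ Q : ℕ, (Q : ℤ) = (cyclotomic n ℤ).eval (p : ℤ) :=
    ⟨((cyclotomic n ℤ).eval (p : ℤ)).toNat, Int.toNat_of_nonneg hQpos.le⟩
  -- size bound : n < Q
  have hQn : n < Q := by
    obtain ⟨m, rfl⟩ : ∃ m, n = m * 2 := ⟨n / 2, by omega⟩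
    have hm2 : 2 ∣ m := by omega
    have hm19 : 19 ≤ m := by omega
    have hexp : (expand ℤ 2) (cyclotomic m ℤ) = cyclotomic (m * 2) ℤ :=
      cyclotomic_expand_eq_cyclotomic Nat.prime_two hm2 ℤ
    have heval : (Q : ℤ) = (cyclotomic m ℤ).eval ((p^2 : ℕ) : ℤ) := by
      rw [hQcast, ← hexp, expand_eval]; push_cast; ring_nf
    have hlt := sub_one_pow_totient_lt_natAbs_cyclotomic_eval (n := m) (q := p^2)
      (by omega) (by nlinarith)
    rw [← heval, Int.natAbs_natCast] at hlt
    have hp4 : 4 ≤ p^2 := by nlinarith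
    have h3 : 3 ^ Nat.totient m ≤ (p^2 - 1) ^ Nat.totient m :=
      Nat.pow_le_pow_left (by omega) _
    have := two_mul_lt_three_pow_totient hm19 (totient_sq_bound m)
    omega
  -- divisibility: for prime ℓ ∣ n, (p^(n/ℓ) - 1) * Q ∣ p^n - 1
  have hA : ∀ ℓ : ℕ, ℓ.Prime → ℓ ∣ n → (p ^ (n / ℓ) - 1) * Q ∣ p ^ n - 1 := by
    intro ℓ hℓ hℓn
    have hprop : n / ℓ ∈ n.properDivisors := by
      rw [Nat.mem_properDivisors]
      exact ⟨Nat.div_dvd_of_dvd hℓn, Nat.div_lt_self hn0 hℓ.one_lt⟩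
    have hdvd := X_pow_sub_one_mul_cyclotomic_dvd_X_pow_sub_one_of_dvd ℤ hprop
    have hev := map_dvd (evalRingHom (p : ℤ)) hdvd
    simp only [map_mul, map_sub, map_pow, coe_evalRingHom, eval_X, eval_one] at hev
    rw [← hQcast] at hev
    have h1 : (1 : ℕ) ≤ p ^ (n / ℓ) := Nat.one_le_pow _ _ (by omega)
    have h2 : (1 : ℕ) ≤ p ^ n := Nat.one_le_pow _ _ (by omega)
    rw [← Int.natCast_dvd_natCast]
    push_cast [Nat.cast_sub h1, Nat.cast_sub h2]
    convert hev using 2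
  have hQdvd : Q ∣ p ^ n - 1 :=
    dvd_trans (Dvd.intro_left _ rfl) (hA 2 Nat.prime_two (by omega))
  have hQ0 : Q ≠ 0 := by omega
  have hpn1 : (1 : ℕ) ≤ p ^ n := Nat.one_le_pow _ _ (by omega)
  have hpn2 : (2 : ℕ) ≤ p ^ n := by
    calc (2:ℕ) = 2^1 := rfl
    _ ≤ p ^ n := (Nat.pow_le_pow_left hp2 1).trans (Nat.pow_le_pow_right (by omega) (by omega))
  -- a prime dividing Q but not n exists
  have claim : ∃ ℓ : ℕ, ℓ.Prime ∧ ℓ ∣ Q ∧ ¬ ℓ ∣ n := by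
    by_contra hcon
    push_neg at hcon
    have hsqf : Squarefree Q := by
      rw [Nat.squarefree_iff_prime_squarefree]
      intro ℓ hℓ hsq
      have hℓQ : ℓ ∣ Q := dvd_trans (Dvd.intro _ rfl) hsq
      have hℓn : ℓ ∣ n := hcon ℓ hℓ hℓQ
      haveI : Fact ℓ.Prime := ⟨hℓ⟩
      haveI : NeZero ℓ := ⟨hℓ.ne_zero⟩
      have hℓp : ¬ ℓ ∣ p := prime_not_dvd_base hℓ hn0 hpn1 (hℓQ.trans hQdvd)
      obtain ⟨a, ha⟩ : ∃ a, a = p ^ (n / ℓ) := ⟨_, rfl⟩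
      have hnl1 : 1 ≤ n / ℓ := Nat.one_le_div_iff hℓ.pos |>.mpr (Nat.le_of_dvd hn0 hℓn)
      have ha2 : 2 ≤ a := by
        calc 2 = 2^1 := rfl
        _ ≤ p ^ (n/ℓ) := Nat.pow_le_pow_left hp2 1 |>.trans (Nat.pow_le_pow_right (by omega) hnl1)
        _ = a := ha.symm
      have han : a ^ ℓ = p ^ n := by
        rw [ha, ← pow_mul, Nat.div_mul_cancel hℓn]
      have ha1 : (1:ℕ) ≤ a := by omega
      -- order facts
      have hpn_one : (p : ZMod ℓ) ^ n = 1 := (zmod_pow_eq_one_iff hpn1).mpr (hℓQ.trans hQdvd)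
      set d := orderOf (p : ZMod ℓ) with hd
      have hd_n : d ∣ n := orderOf_dvd_of_pow_eq_one hpn_one
      have hpne : (p : ZMod ℓ) ≠ 0 := by
        rw [Ne, ZMod.natCast_eq_zero_iff]; exact hℓp
      have hd_l1 : d ∣ ℓ - 1 := orderOf_dvd_of_pow_eq_one (ZMod.pow_card_sub_one_eq_one hpne)
      have hl2 : 2 ≤ ℓ := hℓ.two_le
      have hdpos : 0 < d := by
        rcases Nat.eq_zero_or_pos d with h0 | h
        · exfalso
          have : ℓ - 1 = 0 := Nat.eq_zero_of_zero_dvd (h0 ▸ hd_l1)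
          omega
        · exact h
      have hld : ¬ ℓ ∣ d := by
        intro hdd
        have h1 : d ≤ ℓ - 1 := Nat.le_of_dvd (by omega) hd_l1
        have h2 : ℓ ≤ d := Nat.le_of_dvd hdpos hdd
        omega
      have hdnl : d ∣ n / ℓ := by
        have hco : Nat.Coprime d ℓ := Nat.coprime_comm.mp (hℓ.coprime_iff_not_dvd.mpr hld)
        have hmul : n = (n / ℓ) * ℓ := (Nat.div_mul_cancel hℓn).symm
        exact hco.dvd_of_dvd_mul_right (hmul ▸ hd_n)
      have hℓa1 : ℓ ∣ a - 1 := by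
        rw [ha, ← zmod_pow_eq_one_iff (Nat.one_le_pow _ _ (by omega))]
        exact orderOf_dvd_iff_pow_eq_one.mp hdnl
      rcases hℓ.eq_two_or_odd' with rfl | hodd
      · -- ℓ = 2
        obtain ⟨b, hb⟩ : ∃ b, a = b ^ 2 := by
          refine ⟨p ^ (n/4), ?_⟩
          rw [ha, ← pow_mul]
          congr 1
          omega
        have hbodd : ¬ 2 ∣ b := by
          intro hdb
          apply hℓp
          have h2a : (2:ℕ) ∣ a := by
            rw [hb]; exact dvd_pow hdb two_ne_zero
          rw [ha] at h2a
          exact Nat.prime_two.dvd_of_dvd_pow h2a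
        obtain ⟨c, hc⟩ : ∃ c, b = 2*c+1 := ⟨b/2, by omega⟩
        have ha4 : a = 4*(c*c+c)+1 := by rw [hb, hc]; ring
        have hAdvd := hA 2 Nat.prime_two hℓn
        rw [← ha] at hAdvd
        have hfac : p ^ n - 1 = (a-1)*(a+1) := by
          have hsq2 : a^2 = p^n := by rw [← han]
          have h1 : p ^ n = (a-1)*(a+1) + 1 := by
            rw [← hsq2]
            cases a with
            | zero => omega
            | succ t => simp [Nat.succ_sub_one]; ring
          omega
        have h4Q : (2*2:ℕ) ∣ Q := hsq
        have hdvd4 : (a-1)*(2*2) ∣ (a-1)*(a+1) := by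
          rw [← hfac]
          exact dvd_trans (mul_dvd_mul_left _ h4Q) hAdvd
        have h4a1 : (2*2:ℕ) ∣ a + 1 := by
          rw [Nat.mul_dvd_mul_iff_left (by omega : 0 < a - 1)] at hdvd4
          exact hdvd4
        obtain ⟨t, ht⟩ := h4a1
        omega
      · -- odd ℓ
        have hfin : FiniteMultiplicity ℓ (a - 1) :=
          Nat.finiteMultiplicity_iff.mpr ⟨hℓ.ne_one, by omega⟩
        have hfin2 : FiniteMultiplicity ℓ (p ^ n - 1) :=
          Nat.finiteMultiplicity_iff.mpr ⟨hℓ.ne_one, by omega⟩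
        have hx : ¬ ℓ ∣ a := fun hd => hℓp (hℓ.dvd_of_dvd_pow (ha ▸ hd))
        have hLTE := Nat.emultiplicity_pow_sub_pow hℓ hodd (x := a) (y := 1)
          (by simpa using hℓa1) hx ℓ
        rw [one_pow, han] at hLTE
        have hself : emultiplicity ℓ ℓ = 1 := by
          have h0 : (ℓ:ℕ) ≠ 0 := hℓ.ne_zero
          have := emultiplicity_pow_self h0 hℓ.prime.not_unit 1
          simpa using this
        have hdvd2 : ℓ^2 * (a - 1) ∣ p^n - 1 := by
          obtain ⟨t, ht⟩ := hsq
          refine dvd_trans ?_ (hA ℓ hℓ hℓn)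
          rw [← ha, ht]
          exact ⟨t, by ring⟩
        have hle := emultiplicity_le_emultiplicity_of_dvd_right hdvd2 (a := ℓ)
        have hmul : emultiplicity ℓ (ℓ^2 * (a-1)) = 2 + emultiplicity ℓ (a-1) := by
          rw [emultiplicity_mul hℓ.prime]
          have h0 : (ℓ:ℕ) ≠ 0 := hℓ.ne_zero
          rw [emultiplicity_pow_self h0 hℓ.prime.not_unit 2]
          norm_cast
        rw [hfin.emultiplicity_eq_multiplicity] at hLTE hmul
        rw [hmul, hLTE, hself] at hle
        set e := multiplicity ℓ (a-1) with he
        have : (2 + e : ℕ∞) ≤ (e + 1 : ℕ∞) := by exact_mod_cast hle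
        have hfin3 : (2 + e : ℕ) ≤ e + 1 := by exact_mod_cast this
        omega
    -- now Q squarefree with all prime factors dividing n: Q ∣ n, contradiction
    have hsub : Q.primeFactors ⊆ n.primeFactors := by
      intro q hq
      rw [Nat.mem_primeFactors] at hq ⊢
      exact ⟨hq.1, hcon q hq.1 hq.2.1, hn0.ne'⟩
    have hQdvdn : Q ∣ n := by
      calc Q = ∏ q ∈ Q.primeFactors, q := (Nat.prod_primeFactors_of_squarefree hsqf).symm
        _ ∣ ∏ q ∈ n.primeFactors, q := Finset.prod_dvd_prod_of_subset _ _ _ hsub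
        _ ∣ n := Nat.prod_primeFactors_dvd n
    exact absurd (Nat.le_of_dvd hn0 hQdvdn) (by omega)
  obtain ⟨ℓ, hℓ, hℓQ, hℓn⟩ := claim
  haveI : Fact ℓ.Prime := ⟨hℓ⟩
  haveI : NeZero ℓ := ⟨hℓ.ne_zero⟩
  have hℓp : ¬ ℓ ∣ p := prime_not_dvd_base hℓ hn0 hpn1 (hℓQ.trans hQdvd)
  refine ⟨ℓ, hℓ, hℓp, ?_⟩
  haveI : NeZero ((n : ℕ) : ZMod ℓ) :=
    ⟨by rw [Ne, ZMod.natCast_eq_zero_iff]; exact hℓn⟩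
  have hroot : (cyclotomic n (ZMod ℓ)).IsRoot (p : ZMod ℓ) := by
    have happ := cyclotomic.eval_apply (p : ℤ) n (Int.castRingHom (ZMod ℓ))
    rw [IsRoot.def]
    have hc1 : (Int.castRingHom (ZMod ℓ)) (p : ℤ) = (p : ZMod ℓ) := by simp
    have hc2 : (Int.castRingHom (ZMod ℓ)) ((cyclotomic n ℤ).eval (p:ℤ)) = 0 := by
      rw [← hQcast]
      simp only [eq_intCast, Int.cast_natCast]
      exact (ZMod.natCast_eq_zero_iff Q ℓ).mpr hℓQ
    rw [← hc1, happ, hc2]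
  exact ((isRoot_cyclotomic_iff).mp hroot).eq_orderOf.symm


open Filter

lemma totient_prod_primes : ∀ (S : Finset ℕ), (∀ ℓ ∈ S, ℓ.Prime) →
    Nat.totient (∏ ℓ ∈ S, ℓ) = ∏ ℓ ∈ S, (ℓ - 1) := by
  intro S
  induction S using Finset.induction with
  | empty => simp
  | @insert q s hq ih =>
    intro hS
    have hqp : q.Prime := hS q (Finset.mem_insert_self q s)
    have hco : Nat.Coprime q (∏ ℓ ∈ s, ℓ) := by
      apply Nat.Coprime.prod_right
      intro r hr
      exact (Nat.coprime_primes hqp (hS r (Finset.mem_insert_of_mem hr))).mpr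
        (fun h => hq (h ▸ hr))
    rw [Finset.prod_insert hq, Finset.prod_insert hq, Nat.totient_mul hco,
      Nat.totient_prime hqp, ih (fun ℓ hℓ => hS ℓ (Finset.mem_insert_of_mem hℓ))]

lemma exists_totient_small (c : ℕ) : ∃ a : ℕ, 1 < a ∧ c * Nat.totient a ≤ a := by
  have hnneg : ∀ n : ℕ, 0 ≤ ({p : ℕ | p.Prime}.indicator fun n : ℕ => (1 : ℝ) / n) n := by
    intro n
    apply Set.indicator_nonneg
    intro x _
    positivity
  have hdiv := (not_summable_iff_tendsto_nat_atTop_of_nonneg hnneg).mp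
    not_summable_one_div_on_primes
  obtain ⟨t, hsum, ht3⟩ :=
    ((hdiv.eventually_ge_atTop (Real.log c)).and (eventually_ge_atTop 3)).exists
  classical
  set S := (Finset.range t).filter Nat.Prime with hs
  have hSsum : ∑ i ∈ Finset.range t,
      ({p : ℕ | p.Prime}.indicator fun n : ℕ => (1 : ℝ) / n) i = ∑ ℓ ∈ S, (1:ℝ)/ℓ := by
    rw [hs, Finset.sum_filter]
    apply Finset.sum_congr rfl
    intro i _
    simp [Set.indicator_apply]
  rw [hSsum] at hsum
  have hSp : ∀ ℓ ∈ S, ℓ.Prime := by intro ℓ hℓ; exact (Finset.mem_filter.mp hℓ).2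
  refine ⟨∏ ℓ ∈ S, ℓ, ?_, ?_⟩
  · have h2S : 2 ∈ S := by
      rw [hs, Finset.mem_filter, Finset.mem_range]
      exact ⟨by omega, Nat.prime_two⟩
    have h2dvd : 2 ∣ ∏ ℓ ∈ S, ℓ := Finset.dvd_prod_of_mem _ h2S
    have hpos : 0 < ∏ ℓ ∈ S, ℓ := Finset.prod_pos (fun ℓ hℓ => (hSp ℓ hℓ).pos)
    omega
  · rw [totient_prod_primes S hSp]
    have hreal : (c:ℝ) * ∏ ℓ ∈ S, ((ℓ:ℝ) - 1) ≤ ∏ ℓ ∈ S, (ℓ:ℝ) := by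
      have key : ∀ ℓ ∈ S, ((ℓ:ℝ) - 1) * Real.exp (1/ℓ) ≤ ℓ := by
        intro ℓ hℓ
        have hℓ2 : (2:ℝ) ≤ ℓ := by exact_mod_cast (hSp ℓ hℓ).two_le
        have h1 : (1:ℝ) - 1/ℓ ≤ Real.exp (-(1/ℓ)) := by
          have := Real.add_one_le_exp (-(1/(ℓ:ℝ)))
          linarith
        have h2 : (ℓ:ℝ) - 1 ≤ ℓ * Real.exp (-(1/ℓ)) := by
          have := mul_le_mul_of_nonneg_left h1 (by linarith : (0:ℝ) ≤ ℓ)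
          have hℓ0 : (ℓ:ℝ) ≠ 0 := by linarith
          calc (ℓ:ℝ) - 1 = ℓ * (1 - 1/ℓ) := by field_simp
            _ ≤ ℓ * Real.exp (-(1/ℓ)) := this
        calc ((ℓ:ℝ) - 1) * Real.exp (1/ℓ) ≤ (ℓ * Real.exp (-(1/ℓ))) * Real.exp (1/ℓ) := by
              apply mul_le_mul_of_nonneg_right h2 (Real.exp_nonneg _)
          _ = ℓ := by rw [mul_assoc, ← Real.exp_add]; simp
      have hprod : ∏ ℓ ∈ S, (((ℓ:ℝ) - 1) * Real.exp (1/ℓ)) ≤ ∏ ℓ ∈ S, (ℓ:ℝ) := by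
        apply Finset.prod_le_prod
        · intro ℓ hℓ
          have hℓ2 : (2:ℝ) ≤ ℓ := by exact_mod_cast (hSp ℓ hℓ).two_le
          have := Real.exp_nonneg (1/(ℓ:ℝ))
          nlinarith
        · exact key
      rw [Finset.prod_mul_distrib, ← Real.exp_sum] at hprod
      have hexp : (c:ℝ) ≤ Real.exp (∑ ℓ ∈ S, 1/(ℓ:ℝ)) := by
        rcases Nat.eq_zero_or_pos c with rfl | hc
        · simp only [Nat.cast_zero]
          exact (Real.exp_pos _).le
        · calc (c:ℝ) = Real.exp (Real.log c) := (Real.exp_log (by positivity)).symm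
            _ ≤ _ := Real.exp_le_exp.mpr hsum
      have hnn : (0:ℝ) ≤ ∏ ℓ ∈ S, ((ℓ:ℝ) - 1) := by
        apply Finset.prod_nonneg
        intro ℓ hℓ
        have : (2:ℝ) ≤ ℓ := by exact_mod_cast (hSp ℓ hℓ).two_le
        linarith
      calc (c:ℝ) * ∏ ℓ ∈ S, ((ℓ:ℝ) - 1) ≤ Real.exp (∑ ℓ ∈ S, 1/(ℓ:ℝ)) * ∏ ℓ ∈ S, ((ℓ:ℝ)-1) :=
            mul_le_mul_of_nonneg_right hexp hnn
        _ = (∏ ℓ ∈ S, ((ℓ:ℝ)-1)) * Real.exp (∑ ℓ ∈ S, 1/(ℓ:ℝ)) := by ring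
        _ ≤ _ := hprod
    have hcast : ∀ ℓ ∈ S, ((ℓ - 1 : ℕ) : ℝ) = (ℓ:ℝ) - 1 := by
      intro ℓ hℓ
      have := (hSp ℓ hℓ).two_le
      push_cast [Nat.cast_sub (by omega : 1 ≤ ℓ)]
      ring
    rw [← Nat.cast_le (α := ℝ)]
    push_cast
    rw [Finset.prod_congr rfl hcast]
    exact hreal

/-- Let `p` be a prime. For a prime `ℓ ≠ p`, the index in `(ℤ/ℓℤ)*` of the cyclic
subgroup generated by `p mod ℓ` equals `(ℓ - 1)/ordℓ(p)`.  This index is unbounded as a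
function of `ℓ`: for every positive integer `C` there is a prime `ℓ ≠ p` for which it
exceeds `C`. -/
theorem index_of_powers_of_p_unbounded (p : ℕ) (hp : p.Prime) :
    ∀ C : ℕ, 0 < C → ∃ ℓ : ℕ, ℓ.Prime ∧ ℓ ≠ p ∧
      C < (ℓ - 1) / orderOf (p : ZMod ℓ) := by
  intro C hC
  by_contra hcon
  push_neg at hcon
  have key : ∀ n : ℕ, 4 ∣ n → 40 ≤ n →
      ∃ ℓ : ℕ, ℓ.Prime ∧ orderOf (p : ZMod ℓ) = n ∧ ℓ < C * n + 2 := by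
    intro n h4 hn
    obtain ⟨ℓ, hℓ, hℓp, hord⟩ := exists_order_eq hp h4 hn
    haveI : Fact ℓ.Prime := ⟨hℓ⟩
    haveI : NeZero ℓ := ⟨hℓ.ne_zero⟩
    have hne : ℓ ≠ p := fun h => hℓp (h ▸ dvd_refl ℓ)
    have hb := hcon ℓ hℓ hne
    have hpne : (p : ZMod ℓ) ≠ 0 := by
      rw [Ne, ZMod.natCast_eq_zero_iff]; exact hℓp
    have hdvd : orderOf (p : ZMod ℓ) ∣ ℓ - 1 :=
      orderOf_dvd_of_pow_eq_one (ZMod.pow_card_sub_one_eq_one hpne)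
    rw [hord] at hb hdvd
    obtain ⟨k, hk⟩ := hdvd
    have hn0 : 0 < n := by omega
    rw [hk, Nat.mul_div_cancel_left _ hn0] at hb
    have hle : ℓ - 1 ≤ C * n := by
      rw [hk, mul_comm]
      exact Nat.mul_le_mul_right n hb
    exact ⟨ℓ, hℓ, hord, by have := hℓ.two_le; omega⟩
  obtain ⟨a, ha1, hsmall⟩ := exists_totient_small (32 * (C + 1))
  have ha0 : 0 < a := by omega
  set M : ℕ := 16 * a + 1920 with hM
  set N : ℕ := 4 * M + 44 with hN
  classical
  set g : ℕ → ℕ := fun n =>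
    if h : 4 ∣ n ∧ 40 ≤ n then (key n h.1 h.2).choose else 0 with hg
  have hgspec : ∀ n : ℕ, 4 ∣ n → 40 ≤ n →
      (g n).Prime ∧ orderOf (p : ZMod (g n)) = n ∧ g n < C * n + 2 := by
    intro n h4 hn
    have hgn : g n = (key n h4 hn).choose := by
      rw [hg]
      exact dif_pos ⟨h4, hn⟩
    rw [hgn]
    exact (key n h4 hn).choose_spec
  set D : Finset ℕ := (Finset.range M).image (fun j => 4 * (j + 10)) with hD
  have hDcard : D.card = M := by
    rw [hD, Finset.card_image_of_injective _ (fun x y hxy => by omega), Finset.card_range]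
  have hmem : ∀ n ∈ D, 4 ∣ n ∧ 40 ≤ n ∧ n ≤ N := by
    intro n hn
    rw [hD, Finset.mem_image] at hn
    obtain ⟨j, hj, rfl⟩ := hn
    rw [Finset.mem_range] at hj
    omega
  have hcount : M ≤ (C * N + 2).primeCounting' := by
    rw [← hDcard, ← Nat.primesBelow_card_eq_primeCounting']
    apply Finset.card_le_card_of_injOn g
    · intro n hn
      obtain ⟨h4, h40, hle⟩ := hmem n hn
      obtain ⟨hprime, -, hlt⟩ := hgspec n h4 h40
      rw [Finset.mem_coe, Nat.mem_primesBelow]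
      refine ⟨?_, hprime⟩
      have : C * n ≤ C * N := Nat.mul_le_mul_left C hle
      omega
    · intro n hn m hm hnm
      obtain ⟨h4n, h40n, -⟩ := hmem n (by exact hn)
      obtain ⟨h4m, h40m, -⟩ := hmem m (by exact hm)
      have e1 := (hgspec n h4n h40n).2.1
      have e2 := (hgspec m h4m h40m).2.1
      rw [← e1, ← e2, hnm]
  -- upper bound on primeCounting'
  have hup : (C * N + 2).primeCounting' ≤ (a + 1) + (Nat.totient a * ((C * N + 2) / a + 1)) := by
    calc (C * N + 2).primeCounting' ≤ ((a + 1) + (C * N + 2)).primeCounting' :=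
          Nat.monotone_primeCounting' (by omega)
      _ ≤ (a + 1).primeCounting' + Nat.totient a * ((C * N + 2) / a + 1) :=
          Nat.primeCounting'_add_le ha0.ne' (by omega) _
      _ ≤ (a + 1) + Nat.totient a * ((C * N + 2) / a + 1) := by
          have : (a + 1).primeCounting' ≤ a + 1 := by
            rw [← Nat.primesBelow_card_eq_primeCounting']
            calc (a+1).primesBelow.card ≤ (Finset.range (a+1)).card :=
                  Finset.card_le_card (fun x hx => Finset.mem_range.mpr (Nat.mem_primesBelow.mp hx).1)
              _ = a + 1 := Finset.card_range _
          omega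
  -- smallness arithmetic
  have htpos : 0 < Nat.totient a := Nat.totient_pos.mpr ha0
  have hdiv : Nat.totient a * ((C * N + 2) / a) ≤ (M + 12) / 8 := by
    calc Nat.totient a * ((C * N + 2) / a) ≤ Nat.totient a * (C * N + 2) / a :=
          Nat.mul_div_le_mul_div_assoc _ _ _
      _ ≤ Nat.totient a * (C * N + 2) / (Nat.totient a * (32 * (C + 1))) := by
          apply Nat.div_le_div_left
          · rw [mul_comm]; exact hsmall
          · exact Nat.mul_pos htpos (by omega)
      _ = (C * N + 2) / (32 * (C + 1)) := Nat.mul_div_mul_left _ _ htpos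
      _ ≤ (4 * (C + 1) * (M + 12)) / (32 * (C + 1)) := by
          apply Nat.div_le_div_right
          have hNe : N = 4 * M + 44 := hN
          nlinarith [hNe]
      _ = (M + 12) / 8 := by
          rw [show (32 : ℕ) * (C + 1) = 4 * (C + 1) * 8 by ring]
          exact Nat.mul_div_mul_left _ _ (by positivity)
  have htle : Nat.totient a ≤ a := Nat.totient_le a
  have hM8 : (M + 12) / 8 ≤ 2 * a + 242 := by omega
  have hexpand : Nat.totient a * ((C * N + 2) / a + 1)
      = Nat.totient a * ((C * N + 2) / a) + Nat.totient a := by ring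
  omega
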